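/- Let D be a PID, p ∈ D a prime with finite residue field of cardinality q, and let a_1,…,a_q ∈ D be a complete system of residues modulo p. For N ≥ 2 define g_i = (x−a_i)^(N−1) for 1 ≤ i < q and g_q = (x−a_q)^N. Then for every c ∈ D, v_p(g_1(c)···g_q(c)) ≥ N−1, and there exists c ∈ D with v_p(g_1(c)···g_q(c)) = N−1. -/
import Mathlib


open Polynomial

/-- For a complete residue system `a_1, …, a_q` modulo a prime `p` with
`q = |D/pD|` finite, and `g_i = (x-a_i)^(N-1)` for `i < q`, `g_q = (x-a_q)^N`,
every value of the product `g_1 ⋯ g_q` has `v_p ≥ N-1`, and some value has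
`v_p = N-1` exactly. -/
theorem stmt5 (D : Type*) [CommRing D] [IsDomain D] [IsPrincipalIdealRing D]
    (p : D) (hp : Prime p) (hfin : Finite (D ⧸ Ideal.span {p}))
    (q : ℕ) (hq : q = Nat.card (D ⧸ Ideal.span {p}))
    (a : Fin q → D)
    (ha : Function.Bijective fun i => Ideal.Quotient.mk (Ideal.span {p}) (a i))
    (N : ℕ) (hN : 2 ≤ N) :
    (∀ c : D, p ^ (N - 1) ∣
        ∏ i : Fin q, ((X - C (a i)) ^ (if (i : ℕ) + 1 = q then N else N - 1)).eval c) ∧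
    (∃ c : D, p ^ (N - 1) ∣
        (∏ i : Fin q, ((X - C (a i)) ^ (if (i : ℕ) + 1 = q then N else N - 1)).eval c) ∧
      ¬ p ^ N ∣
        ∏ i : Fin q, ((X - C (a i)) ^ (if (i : ℕ) + 1 = q then N else N - 1)).eval c) := by
  have hspan : Ideal.span {p} ≠ ⊤ := by
    simp only [ne_eq, Ideal.span_singleton_eq_top]
    exact hp.not_unit
  haveI : Nontrivial (D ⧸ Ideal.span {p}) := Ideal.Quotient.nontrivial_iff.mpr hspan
  have hq2 : 2 ≤ q := by
    rw [hq]
    exact Finite.one_lt_card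
  have hdvd : ∀ i : Fin q, ∀ c : D,
      (p ∣ c - a i ↔ Ideal.Quotient.mk (Ideal.span {p}) (a i)
        = Ideal.Quotient.mk (Ideal.span {p}) c) := by
    intro i c
    rw [Ideal.Quotient.eq, Ideal.mem_span_singleton, dvd_sub_comm]
  have heval : ∀ (i : Fin q) (c : D),
      ((X - C (a i)) ^ (if (i : ℕ) + 1 = q then N else N - 1)).eval c
        = (c - a i) ^ (if (i : ℕ) + 1 = q then N else N - 1) := by
    intro i c; split <;> simp
  constructor
  · intro c
    obtain ⟨i, hi⟩ := ha.2 (Ideal.Quotient.mk _ c)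
    have hpd : p ∣ c - a i := (hdvd i c).2 hi
    have h1 : p ^ (N - 1) ∣ ((X - C (a i)) ^ (if (i : ℕ) + 1 = q then N else N - 1)).eval c := by
      rw [heval]
      refine dvd_trans (pow_dvd_pow_of_dvd hpd _) (pow_dvd_pow _ ?_)
      split <;> omega
    exact h1.trans (Finset.dvd_prod_of_mem _ (Finset.mem_univ i))
  · have h0 : (0 : ℕ) < q := by omega
    set i₀ : Fin q := ⟨0, h0⟩ with hi₀
    set c := a i₀ + p with hc
    have hexp : (if (i₀ : ℕ) + 1 = q then N else N - 1) = N - 1 := by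
      simp only [hi₀]
      rw [if_neg]; omega
    have hrest : ¬ p ∣ ∏ i ∈ Finset.univ.erase i₀,
        ((X - C (a i)) ^ (if (i : ℕ) + 1 = q then N else N - 1)).eval c := by
      rw [Prime.dvd_finset_prod_iff hp]
      rintro ⟨i, hi, hdvd'⟩
      have hne : i ≠ i₀ := (Finset.mem_erase.1 hi).1
      rw [heval] at hdvd'
      have hpd : p ∣ c - a i := hp.dvd_of_dvd_pow hdvd'
      have : Ideal.Quotient.mk (Ideal.span {p}) (a i)
          = Ideal.Quotient.mk (Ideal.span {p}) (a i₀) := by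
        have h1 := (hdvd i c).1 hpd
        have h2 := (hdvd i₀ c).1 (by simp [hc])
        rw [h1, h2]
      exact hne (ha.1 this)
    have hprod : (∏ i : Fin q, ((X - C (a i)) ^ (if (i : ℕ) + 1 = q then N else N - 1)).eval c)
        = p ^ (N - 1) * ∏ i ∈ Finset.univ.erase i₀,
            ((X - C (a i)) ^ (if (i : ℕ) + 1 = q then N else N - 1)).eval c := by
      rw [← Finset.mul_prod_erase _ _ (Finset.mem_univ i₀)]
      congr 1
      rw [heval, hexp, hc]
      ring_nf
    refine ⟨c, ?_, ?_⟩
    · rw [hprod]; exact Dvd.intro _ rfl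
    · rw [hprod]
      intro hNd
      have hpow : p ^ N = p ^ (N - 1) * p := by
        rw [← pow_succ]; congr 1; omega
      rw [hpow] at hNd
      have hne0 : p ^ (N - 1) ≠ 0 := pow_ne_zero _ hp.ne_zero
      exact hrest (by
        have := (mul_dvd_mul_iff_left hne0).1 hNd
        exact this)
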